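/- Let A be an n×n symmetric integer matrix whose characteristic polynomial is irreducible over ℚ. Then there exist polynomials φ₁, φ₂, …, φ_n with rational coefficients, each of degree less than n, such that for every real eigenvalue λ of A, the vector ξ = (φ₁(λ), φ₂(λ), …, φ_n(λ))ᵀ is nonzero and satisfies Aξ = λξ. -/

import Mathlib

open Matrix Polynomial

lemma aux_natDegree_det_le {m : Type*} [Fintype m] [DecidableEq m]
    (M : Matrix m m (Polynomial ℚ))
    (r : m → ℕ) (h : ∀ i j, (M i j).natDegree ≤ r i) :
    (Matrix.det M).natDegree ≤ ∑ i, r i := by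
  rw [Matrix.det_apply']
  apply Polynomial.natDegree_sum_le_of_forall_le
  intro σ _
  refine le_trans (Polynomial.natDegree_mul_le) ?_
  have h1 : (Polynomial.natDegree ((Equiv.Perm.sign σ : ℤ) : Polynomial ℚ)) = 0 :=
    Polynomial.natDegree_intCast _
  rw [h1, zero_add]
  refine (Polynomial.natDegree_prod_le _ _).trans ?_
  calc ∑ i, (M (σ i) i).natDegree ≤ ∑ i, r (σ i) :=
        Finset.sum_le_sum (fun i _ => h (σ i) i)
    _ = ∑ i, r i := Equiv.sum_comp σ r

theorem stmt9 {n : ℕ} (A : Matrix (Fin n) (Fin n) ℤ)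
    (hA : A.IsSymm)
    (hirr : Irreducible (A.charpoly.map (Int.castRingHom ℚ))) :
    ∃ φ : Fin n → Polynomial ℚ,
      (∀ i, (φ i).degree < n) ∧
      ∀ lam : ℝ, ((A.map ((↑) : ℤ → ℝ)).charpoly).IsRoot lam →
        (fun i => Polynomial.aeval lam (φ i)) ≠ 0 ∧
        (A.map ((↑) : ℤ → ℝ)) *ᵥ (fun i => Polynomial.aeval lam (φ i))
          = lam • fun i => Polynomial.aeval lam (φ i) := by
  -- n ≥ 1
  have hn : 0 < n := by
    rcases Nat.eq_zero_or_pos n with h0 | h; swap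
    · exact h
    exfalso
    subst h0
    have : A.charpoly = 1 := by
      rw [Matrix.charpoly, Matrix.det_isEmpty]
    rw [this, Polynomial.map_one] at hirr
    exact not_irreducible_one hirr
  set A' : Matrix (Fin n) (Fin n) ℚ := A.map (Int.castRingHom ℚ) with hA'
  set p : Polynomial ℚ := A.charpoly.map (Int.castRingHom ℚ) with hp
  have hpcharp : A'.charpoly = p := Matrix.charpoly_map A (Int.castRingHom ℚ)
  have hpmonic : p.Monic := by rw [← hpcharp]; exact A'.charpoly_monic
  have hpdeg : p.natDegree = n := by
    rw [← hpcharp, Matrix.charpoly_natDegree_eq_dim, Fintype.card_fin]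
  set M : Matrix (Fin n) (Fin n) (Polynomial ℚ) := Matrix.charmatrix A' with hM
  set B : Matrix (Fin n) (Fin n) (Polynomial ℚ) := M.adjugate with hB
  -- degree bounds on entries of B
  have hBdeg : ∀ i j, (B i j).natDegree ≤ n - 1 := by
    intro i j
    rw [hB, Matrix.adjugate_apply]
    have := aux_natDegree_det_le (M.updateRow j (Pi.single i 1))
        (fun k => if k = j then 0 else 1) ?_
    · refine this.trans ?_
      calc ∑ k : Fin n, (if k = j then 0 else 1)
          = ∑ k ∈ Finset.univ.erase j, (if k = j then 0 else 1) := by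
            rw [Finset.sum_erase _ (by simp)]
        _ ≤ (Finset.univ.erase j).card • 1 :=
            Finset.sum_le_card_nsmul _ _ 1 (fun k _ => by split <;> simp)
        _ = n - 1 := by
            simp [Finset.card_erase_of_mem]
    · intro k l
      show ((M.updateRow j (Pi.single i 1)) k l).natDegree ≤ if k = j then 0 else 1
      by_cases hkj : k = j
      · subst hkj
        rw [Matrix.updateRow_self, if_pos rfl]
        rcases eq_or_ne l i with h | h
        · subst h; simp
        · rw [Pi.single_eq_of_ne h]; simp
      · rw [Matrix.updateRow_ne hkj, if_neg hkj, hM]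
        rcases eq_or_ne k l with h | h
        · subst h
          rw [Matrix.charmatrix_apply_eq]
          refine (Polynomial.natDegree_sub_le _ _).trans ?_
          simp
        · rw [Matrix.charmatrix_apply_ne _ _ _ h]
          simp
  have hBdeg' : ∀ i j, (B i j).degree < (n : WithBot ℕ) := by
    intro i j
    rcases eq_or_ne (B i j) 0 with h | h
    · rw [h, Polynomial.degree_zero]
      exact bot_lt_iff_ne_bot.mpr (by simp)
    · rw [Polynomial.degree_eq_natDegree h]
      exact_mod_cast lt_of_le_of_lt (hBdeg i j) (by omega)
  -- B is nonzero
  have hpne : p ≠ 0 := hpmonic.ne_zero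
  have hBne : B ≠ 0 := by
    intro h0
    have hdet : B.det = p ^ (Fintype.card (Fin n) - 1) := by
      rw [hB, Matrix.det_adjugate]
      have : M.det = p := hpcharp ▸ rfl
      rw [this]
    have : Nonempty (Fin n) := ⟨⟨0, hn⟩⟩
    rw [h0, Matrix.det_zero] at hdet
    exact pow_ne_zero _ hpne hdet.symm
  obtain ⟨i₀, j₀, hij⟩ : ∃ i j, B i j ≠ 0 := by
    by_contra hc
    push_neg at hc
    exact hBne (by ext i j; simp [hc i j])
  -- p does not divide B i₀ j₀
  have hnotdvd : ¬ p ∣ B i₀ j₀ := by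
    intro hdvd
    have := Polynomial.degree_le_of_dvd hdvd hij
    rw [Polynomial.degree_eq_natDegree hpne, hpdeg] at this
    exact absurd (this.trans_lt (hBdeg' i₀ j₀)) (lt_irrefl _)
  have hcop : IsCoprime p (B i₀ j₀) := hirr.coprime_iff_not_dvd.mpr hnotdvd
  obtain ⟨a, b, hab⟩ := hcop
  refine ⟨fun i => B i j₀, fun i => hBdeg' i j₀, ?_⟩
  intro lam hroot
  -- the evaluation homomorphism
  set f : Polynomial ℚ →+* ℝ := (Polynomial.aeval lam : Polynomial ℚ →ₐ[ℚ] ℝ).toRingHom with hf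
  have hfp : f p = 0 := by
    have h1 : p.map (algebraMap ℚ ℝ) = (A.map ((↑) : ℤ → ℝ)).charpoly := by
      rw [hp, Polynomial.map_map]
      have h2 : (algebraMap ℚ ℝ).comp (Int.castRingHom ℚ) = Int.castRingHom ℝ := by
        ext1
        simp
      rw [h2]
      rw [← Matrix.charpoly_map A (Int.castRingHom ℝ)]
      rfl
    have : f p = (p.map (algebraMap ℚ ℝ)).eval lam := by
      rw [hf]; simp [Polynomial.aeval_def, Polynomial.eval_map]
    rw [this, h1]
    exact hroot
  have hξne : f (B i₀ j₀) ≠ 0 := by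
    intro h0
    have := congrArg f hab
    simp only [map_add, _root_.map_mul, _root_.map_one, hfp, h0, mul_zero, add_zero] at this
    exact one_ne_zero this.symm
  constructor
  · intro h0
    exact hξne (congrFun h0 i₀)
  · -- eigen equation
    funext k
    have hkey : ∑ l, f (M k l) * f (B l j₀) = 0 := by
      have h1 : (M * B) k j₀ = M.det * (1 : Matrix (Fin n) (Fin n) (Polynomial ℚ)) k j₀ := by
        rw [hB, Matrix.mul_adjugate, Matrix.smul_apply, smul_eq_mul]
      rw [Matrix.mul_apply] at h1
      have := congrArg f h1
      rw [map_sum] at this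
      simp only [_root_.map_mul] at this
      rw [this]
      have hdetp : M.det = p := hpcharp ▸ rfl
      rcases eq_or_ne k j₀ with h | h
      · subst h
        simp [hdetp, hfp]
      · simp [Matrix.one_apply_ne h]
    have hfM : ∀ l, f (M k l) = (if k = l then lam else 0) - (A.map ((↑) : ℤ → ℝ)) k l := by
      intro l
      rcases eq_or_ne k l with h | h
      · subst h
        rw [hM, Matrix.charmatrix_apply_eq, if_pos rfl]
        simp [hf, hA', Matrix.map_apply]
      · rw [hM, Matrix.charmatrix_apply_ne _ _ _ h, if_neg h]
        simp [hf, hA', Matrix.map_apply]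
    simp only [hfM, sub_mul, ite_mul, zero_mul, Finset.sum_sub_distrib,
      Finset.sum_ite_eq, Finset.mem_univ, if_pos] at hkey
    have : lam * f (B k j₀) - ∑ l, (A.map ((↑) : ℤ → ℝ)) k l * f (B l j₀) = 0 := hkey
    show ∑ l, (A.map ((↑) : ℤ → ℝ)) k l * _ = lam * _
    have h2 : ∑ l, (A.map ((↑) : ℤ → ℝ)) k l * f (B l j₀) = lam * f (B k j₀) := by
      linarith [this]
    convert h2 using 2 <;> rfl
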